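/- Let p and q be primes with p ≡ 3 (mod 4), q ≡ 3 (mod 8), and let r' be an integer with r'² + p ≡ 0 (mod 4q). Work in B = ℍ[ℚ, −q, −p] with basis 1, i, j, k (i² = −q, j² = −p, k = ij), and let M be the ℤ-span of {1, (1+j)/2, i, (r'·i − k)/(2q)}. Then: (a) the Gross lattice {2x − trd(x) : x ∈ M} equals the ℤ-span of {2i, (r'·i − k)/q, j}; (b) with pairing (x, y) = (1/2)·trd(x·ȳ), the element j is orthogonal to both 2i and (r'·i − k)/q; (c) the Gram matrix of (2i, (r'·i − k)/q) is [[4q, 2r'], [2r', (r'² + p)/q]], whose determinant is 4p; consequently (d) the Gram determinant of the basis (2i, (r'·i − k)/q, j) is 4p². In particular the Gross lattice is the orthogonal direct sum of the rank-2 lattice spanned by 2i and (r'·i − k)/q, of determinant 4p, and ℤ·j. -/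

import Mathlib

open scoped Quaternion

/-- Ibukiyama's order `O'(q)`: for primes `p ≡ 3 (mod 4)`, `q ≡ 3 (mod 8)` and an integer
`r'` with `r'² + p ≡ 0 (mod 4q)`, in `B = ℍ[ℚ, -q, -p]` the Gross lattice of
`M = ⟨1, (1+j)/2, i, (r'i - k)/(2q)⟩` is spanned by `{2i, (r'i - k)/q, j}`; the vector `j` is
orthogonal to the other two; the Gram matrix of `(2i, (r'i - k)/q)` is
`[[4q, 2r'], [2r', (r'² + p)/q]]` of determinant `4p`; and the Gram determinant of the full
basis is `4p²`. -/
theorem stmt_18 (p q : ℕ) (hp : p.Prime) (hq : q.Prime)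
    (hp4 : p % 4 = 3) (hq8 : q % 8 = 3) (r : ℤ) (hr : (r ^ 2 + (p : ℤ)) % (4 * (q : ℤ)) = 0)
    (i j k : ℍ[ℚ, -(q : ℚ), -(p : ℚ)])
    (hi : i = ⟨0, 1, 0, 0⟩) (hj : j = ⟨0, 0, 1, 0⟩) (hk : k = i * j)
    (M : Submodule ℤ ℍ[ℚ, -(q : ℚ), -(p : ℚ)])
    (hM : M = Submodule.span ℤ
      ({1, ((1 : ℚ)/2) • (1 + j), i, ((1 : ℚ)/(2 * q)) • ((r : ℚ) • i - k)} :
        Set ℍ[ℚ, -(q : ℚ), -(p : ℚ)]))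
    (g : ℍ[ℚ, -(q : ℚ), -(p : ℚ)]) (hg : g = ((1 : ℚ)/(q : ℚ)) • ((r : ℚ) • i - k)) :
    -- (a) the Gross lattice of `M` is spanned by `2i`, `(r'i - k)/q`, `j`
    {y | ∃ x ∈ M, y = 2 * x - (x + star x)} =
      (Submodule.span ℤ ({2 * i, g, j} : Set ℍ[ℚ, -(q : ℚ), -(p : ℚ)]) :
        Set ℍ[ℚ, -(q : ℚ), -(p : ℚ)]) ∧
    -- (b) `j` is orthogonal to `2i` and `(r'i - k)/q`
    (j * star (2 * i)).re = 0 ∧ (j * star g).re = 0 ∧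
    -- (c) the Gram matrix of `(2i, (r'i - k)/q)` and its determinant
    ((2 * i) * star (2 * i)).re = 4 * (q : ℚ) ∧
    ((2 * i) * star g).re = 2 * (r : ℚ) ∧
    (g * star g).re = ((r : ℚ) ^ 2 + (p : ℚ)) / (q : ℚ) ∧
    (4 * (q : ℚ)) * (((r : ℚ) ^ 2 + (p : ℚ)) / (q : ℚ)) - (2 * (r : ℚ)) ^ 2 = 4 * (p : ℚ) ∧
    -- (d) the Gram determinant of the basis `(2i, (r'i - k)/q, j)` is `4p²`
    (Matrix.of fun a b : Fin 3 =>
        ((![2 * i, g, j] a) * star (![2 * i, g, j] b)).re).det = 4 * (p : ℚ) ^ 2 := by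
  have hq0 : (q : ℚ) ≠ 0 := Nat.cast_ne_zero.mpr hq.pos.ne'
  have hik : i * j = ⟨0, 0, 0, 1⟩ := by
    rw [hi, hj, QuaternionAlgebra.mk_mul_mk]
    ext <;> ring
  have h2i : 2 * i = ⟨0, 2, 0, 0⟩ := by
    rw [two_mul, hi, QuaternionAlgebra.mk_add_mk]
    norm_num
  have hg' : g = ⟨0, (r : ℚ)/q, 0, -(1/q)⟩ := by
    rw [hg, hk, hik, hi, QuaternionAlgebra.smul_mk, QuaternionAlgebra.mk_sub_mk,
      QuaternionAlgebra.smul_mk]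
    ext <;> simp only [smul_eq_mul] <;> field_simp <;> ring
  have hgross : {y | ∃ x ∈ M, y = 2 * x - (x + star x)} =
      (Submodule.span ℤ ({2 * i, g, j} : Set ℍ[ℚ, -(q : ℚ), -(p : ℚ)]) :
        Set ℍ[ℚ, -(q : ℚ), -(p : ℚ)]) := by
    let f : ℍ[ℚ, -(q : ℚ), -(p : ℚ)] →ₗ[ℤ] ℍ[ℚ, -(q : ℚ), -(p : ℚ)] :=
      LinearMap.id -
        (starAddEquiv : ℍ[ℚ, -(q : ℚ), -(p : ℚ)] ≃+ ℍ[ℚ, -(q : ℚ), -(p : ℚ)]).toAddMonoidHom.toIntLinearMap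
    have hf : ∀ x : ℍ[ℚ, -(q : ℚ), -(p : ℚ)], f x = x - star x := fun x => rfl
    have h1 : {y | ∃ x ∈ M, y = 2 * x - (x + star x)} = (Submodule.map f M :
        Set ℍ[ℚ, -(q : ℚ), -(p : ℚ)]) := by
      ext y
      simp only [Set.mem_setOf_eq, Submodule.map_coe, Set.mem_image, SetLike.mem_coe]
      constructor
      · rintro ⟨x, hx, rfl⟩
        exact ⟨x, hx, by rw [hf, two_mul]; abel⟩
      · rintro ⟨x, hx, rfl⟩
        exact ⟨x, hx, by rw [hf, two_mul]; abel⟩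
    rw [h1, hM, Submodule.map_span,
      Set.image_insert_eq, Set.image_insert_eq, Set.image_insert_eq, Set.image_singleton]
    have e1 : f 1 = 0 := by rw [hf]; simp
    have e2 : f (((1 : ℚ)/2) • (1 + j)) = j := by
      rw [hf, hj]
      rw [show (1 : ℍ[ℚ, -(q : ℚ), -(p : ℚ)]) = ⟨1,0,0,0⟩ from rfl,
        QuaternionAlgebra.mk_add_mk, QuaternionAlgebra.smul_mk, QuaternionAlgebra.star_mk,
        QuaternionAlgebra.mk_sub_mk]
      ext <;> norm_num
    have e3 : f i = 2 * i := by
      rw [hf, h2i, hi, QuaternionAlgebra.star_mk, QuaternionAlgebra.mk_sub_mk]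
      norm_num
    have e4 : f (((1 : ℚ)/(2 * q)) • ((r : ℚ) • i - k)) = g := by
      rw [hf, hk, hik, hi, hg']
      rw [QuaternionAlgebra.smul_mk, QuaternionAlgebra.mk_sub_mk, QuaternionAlgebra.smul_mk,
        QuaternionAlgebra.star_mk, QuaternionAlgebra.mk_sub_mk]
      ext <;> simp only [smul_eq_mul] <;> field_simp <;> ring
    rw [e1, e2, e3, e4, Submodule.span_insert_zero]
    have hsets : ({j, 2 * i, g} : Set ℍ[ℚ, -(q : ℚ), -(p : ℚ)]) = {2 * i, g, j} := by
      ext x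
      simp only [Set.mem_insert_iff, Set.mem_singleton_iff]
      tauto
    rw [hsets]
  have b1 : (j * star (2 * i)).re = 0 := by
    rw [h2i, hj, QuaternionAlgebra.star_mk, QuaternionAlgebra.mk_mul_mk]
    dsimp only
    ring
  have b2 : (j * star g).re = 0 := by
    rw [hg', hj, QuaternionAlgebra.star_mk, QuaternionAlgebra.mk_mul_mk]
    dsimp only
    ring
  have c1 : ((2 * i) * star (2 * i)).re = 4 * (q : ℚ) := by
    rw [h2i, QuaternionAlgebra.star_mk, QuaternionAlgebra.mk_mul_mk]
    dsimp only
    ring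
  have c2 : ((2 * i) * star g).re = 2 * (r : ℚ) := by
    rw [h2i, hg', QuaternionAlgebra.star_mk, QuaternionAlgebra.mk_mul_mk]
    dsimp only
    field_simp
    ring
  have c3 : (g * star g).re = ((r : ℚ) ^ 2 + (p : ℚ)) / (q : ℚ) := by
    rw [hg', QuaternionAlgebra.star_mk, QuaternionAlgebra.mk_mul_mk]
    dsimp only
    field_simp
    ring
  have c4 : (4 * (q : ℚ)) * (((r : ℚ) ^ 2 + (p : ℚ)) / (q : ℚ)) - (2 * (r : ℚ)) ^ 2
      = 4 * (p : ℚ) := by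
    field_simp
    ring
  refine ⟨hgross, b1, b2, c1, c2, c3, c4, ?_⟩
  have d1 : ((2 * i) * star j).re = 0 := by
    rw [h2i, hj, QuaternionAlgebra.star_mk, QuaternionAlgebra.mk_mul_mk]
    dsimp only
    ring
  have d2 : (g * star (2 * i)).re = 2 * (r : ℚ) := by
    rw [h2i, hg', QuaternionAlgebra.star_mk, QuaternionAlgebra.mk_mul_mk]
    dsimp only
    field_simp
    ring
  have d3 : (g * star j).re = 0 := by
    rw [hg', hj, QuaternionAlgebra.star_mk, QuaternionAlgebra.mk_mul_mk]
    dsimp only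
    ring
  have d4 : (j * star j).re = (p : ℚ) := by
    rw [hj, QuaternionAlgebra.star_mk, QuaternionAlgebra.mk_mul_mk]
    dsimp only
    ring
  rw [Matrix.det_fin_three]
  simp only [Matrix.of_apply, Matrix.cons_val_zero, Matrix.cons_val_one, Matrix.head_cons,
    Matrix.cons_val_two, Matrix.tail_cons]
  rw [b1, b2, c1, c2, c3, d1, d2, d3, d4]
  field_simp
  ring
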